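/- arXiv:2209.08551 — 2 statements merged into one kernel-verified Lean document; each statement's English description precedes it below -/
import Mathlib

section
/- Let {f_k} be a (Θ,Θ*)-frame for a Hilbert space H with bounds γ, δ, and let Ξ ∈ B(H) satisfy: (i) Ξ is hyponormal on the range of Θ, i.e., ‖Ξ* g‖ ≤ ‖Ξ g‖ for all g ∈ Ran(Θ); (ii) Θ Ξ* = Ξ* Θ. Then {Ξ f_k} is a (ΞΘ, (ΞΘ)*)-frame for H with the same bounds: γ‖(ΞΘ)*f‖² ≤ Σ_k |⟨Ξf_k, f⟩|² ≤ δ‖ΞΘ f‖² for all f ∈ H. -/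
open ContinuousLinearMap

theorem stmt_4 {H : Type*} [NormedAddCommGroup H] [InnerProductSpace ℂ H] [CompleteSpace H]
    {I : Type*} [Countable I] (f : I → H) (Θ Ξ : H →L[ℂ] H) (γ δ : ℝ)
    (hγ : 0 < γ) (hδ : 0 < δ)
    (hframe : ∀ g : H, γ * ‖Θ.adjoint g‖ ^ 2 ≤ ∑' k, ‖(inner ℂ g (f k) : ℂ)‖ ^ 2 ∧
      ∑' k, ‖(inner ℂ g (f k) : ℂ)‖ ^ 2 ≤ δ * ‖Θ g‖ ^ 2)
    (hhypo : ∀ g ∈ Set.range Θ, ‖Ξ.adjoint g‖ ≤ ‖Ξ g‖)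
    (hcomm : Θ ∘L Ξ.adjoint = Ξ.adjoint ∘L Θ) :
    ∀ g : H,
      γ * ‖(Ξ ∘L Θ).adjoint g‖ ^ 2 ≤ ∑' k, ‖(inner ℂ (Ξ (f k)) g : ℂ)‖ ^ 2 ∧
      ∑' k, ‖(inner ℂ (Ξ (f k)) g : ℂ)‖ ^ 2 ≤ δ * ‖(Ξ ∘L Θ) g‖ ^ 2 := by
  intro g
  have hsum : (∑' k, ‖(inner ℂ (Ξ (f k)) g : ℂ)‖ ^ 2) =
      ∑' k, ‖(inner ℂ (Ξ.adjoint g) (f k) : ℂ)‖ ^ 2 := by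
    refine tsum_congr fun k => ?_
    rw [← adjoint_inner_right, norm_inner_symm]
  obtain ⟨h1, h2⟩ := hframe (Ξ.adjoint g)
  constructor
  · rw [hsum]
    have : (Ξ ∘L Θ).adjoint g = Θ.adjoint (Ξ.adjoint g) := by
      rw [adjoint_comp]; rfl
    rw [this]
    exact h1
  · rw [hsum]
    refine h2.trans ?_
    have hΘ : Θ (Ξ.adjoint g) = Ξ.adjoint (Θ g) := by
      have := congrArg (fun T : H →L[ℂ] H => T g) hcomm
      simpa using this
    have hineq : ‖Ξ.adjoint (Θ g)‖ ≤ ‖Ξ (Θ g)‖ := hhypo _ ⟨g, rfl⟩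
    have : ‖Θ (Ξ.adjoint g)‖ ^ 2 ≤ ‖(Ξ ∘L Θ) g‖ ^ 2 := by
      rw [hΘ]
      simpa using pow_le_pow_left₀ (norm_nonneg _) hineq 2
    nlinarith
end

section
/- Let {f_k}_{k∈I} and {g_k}_{k∈I} be (Θ,Θ*)-frames for a Hilbert space H with bounds γ₁, δ₁ and γ₂, δ₂ respectively. Suppose Θ* is bounded below by m₀ > 0 and √(γ₁/δ₂) > ‖Θ‖/m₀. Then {f_k + g_k}_{k∈I} is a (Θ,Θ*)-frame for H with lower bound (√γ₁ − √δ₂·‖Θ‖/m₀)² and upper bound 2(δ₁ + δ₂). -/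
open ContinuousLinearMap

lemma rpow_two_eq (x : ℝ) : x ^ (2:ℝ) = x ^ 2 := by
  rw [show (2:ℝ) = ((2:ℕ):ℝ) by norm_num, Real.rpow_natCast]

lemma mink_sq {I : Type*} (c b : I → ℝ) (hc : ∀ i, 0 ≤ c i) (hb : ∀ i, 0 ≤ b i)
    (hcs : Summable fun i => c i ^ 2) (hbs : Summable fun i => b i ^ 2) :
    (Summable fun i => (c i + b i) ^ 2) ∧
      Real.sqrt (∑' i, (c i + b i) ^ 2) ≤
        Real.sqrt (∑' i, c i ^ 2) + Real.sqrt (∑' i, b i ^ 2) := by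
  have h := Real.Lp_add_le_tsum_of_nonneg (p := 2) one_le_two hc hb
    (by simpa only [rpow_two_eq] using hcs) (by simpa only [rpow_two_eq] using hbs)
  simp only [rpow_two_eq] at h
  refine ⟨h.1, ?_⟩
  rw [Real.sqrt_eq_rpow, Real.sqrt_eq_rpow, Real.sqrt_eq_rpow]
  exact h.2

set_option maxHeartbeats 1000000 in
theorem stmt_7 {H : Type*} [NormedAddCommGroup H] [InnerProductSpace ℂ H] [CompleteSpace H]
    {I : Type*} [Countable I] (f g : I → H) (Θ : H →L[ℂ] H) (γ₁ δ₁ γ₂ δ₂ m₀ : ℝ)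
    (hγ₁ : 0 < γ₁) (hδ₁ : 0 < δ₁) (hγ₂ : 0 < γ₂) (hδ₂ : 0 < δ₂) (hm₀ : 0 < m₀)
    (hframef : ∀ x : H, γ₁ * ‖Θ.adjoint x‖ ^ 2 ≤ ∑' k, ‖(inner ℂ x (f k) : ℂ)‖ ^ 2 ∧
      ∑' k, ‖(inner ℂ x (f k) : ℂ)‖ ^ 2 ≤ δ₁ * ‖Θ x‖ ^ 2)
    (hframeg : ∀ x : H, γ₂ * ‖Θ.adjoint x‖ ^ 2 ≤ ∑' k, ‖(inner ℂ x (g k) : ℂ)‖ ^ 2 ∧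
      ∑' k, ‖(inner ℂ x (g k) : ℂ)‖ ^ 2 ≤ δ₂ * ‖Θ x‖ ^ 2)
    (hbb : ∀ x : H, m₀ * ‖x‖ ≤ ‖Θ.adjoint x‖)
    (hcond : ‖Θ‖ / m₀ < Real.sqrt (γ₁ / δ₂)) :
    ∀ x : H,
      (Real.sqrt γ₁ - Real.sqrt δ₂ * ‖Θ‖ / m₀) ^ 2 * ‖Θ.adjoint x‖ ^ 2 ≤
        ∑' k, ‖(inner ℂ x (f k + g k) : ℂ)‖ ^ 2 ∧
      ∑' k, ‖(inner ℂ x (f k + g k) : ℂ)‖ ^ 2 ≤ 2 * (δ₁ + δ₂) * ‖Θ x‖ ^ 2 := by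
  intro x
  by_cases hx : x = 0
  · subst hx
    simp [inner_zero_left, tsum_zero]
  have hfx := hframef x
  have hgx := hframeg x
  set a : I → ℝ := fun k => ‖(inner ℂ x (f k) : ℂ)‖ with ha
  set b : I → ℝ := fun k => ‖(inner ℂ x (g k) : ℂ)‖ with hb
  set c : I → ℝ := fun k => ‖(inner ℂ x (f k + g k) : ℂ)‖ with hc
  have hna : ∀ k, 0 ≤ a k := fun k => norm_nonneg _
  have hnb : ∀ k, 0 ≤ b k := fun k => norm_nonneg _
  have hnc : ∀ k, 0 ≤ c k := fun k => norm_nonneg _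
  have hΘx : 0 < ‖Θ.adjoint x‖ :=
    lt_of_lt_of_le (mul_pos hm₀ (norm_pos_iff.mpr hx)) (hbb x)
  have hsa : Summable fun k => a k ^ 2 := by
    by_contra h
    rw [tsum_eq_zero_of_not_summable h] at hfx
    nlinarith [hfx.1, mul_pos hγ₁ (pow_pos hΘx 2)]
  have hsb : Summable fun k => b k ^ 2 := by
    by_contra h
    rw [tsum_eq_zero_of_not_summable h] at hgx
    nlinarith [hgx.1, mul_pos hγ₂ (pow_pos hΘx 2)]
  have hsplit : ∀ k, (inner ℂ x (f k + g k) : ℂ) = inner ℂ x (f k) + inner ℂ x (g k) :=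
    fun k => inner_add_right x (f k) (g k)
  have hcab : ∀ k, c k ≤ a k + b k := fun k => by
    simp only [hc, hsplit k]; exact norm_add_le _ _
  have hacb : ∀ k, a k ≤ c k + b k := fun k => by
    have h9 : (inner ℂ x (f k) : ℂ) = inner ℂ x (f k + g k) - inner ℂ x (g k) := by
      rw [hsplit k]; ring
    show ‖(inner ℂ x (f k) : ℂ)‖ ≤ _
    rw [h9]
    exact norm_sub_le _ _
  have hsab := mink_sq a b hna hnb hsa hsb
  have hsc : Summable fun k => c k ^ 2 :=
    Summable.of_nonneg_of_le (fun k => sq_nonneg _)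
      (fun k => pow_le_pow_left₀ (hnc k) (hcab k) 2) hsab.1
  have hscb := mink_sq c b hnc hnb hsc hsb
  constructor
  · -- lower bound
    have h1 : Real.sqrt γ₁ * ‖Θ.adjoint x‖ ≤ Real.sqrt (∑' k, a k ^ 2) := by
      have := Real.sqrt_le_sqrt hfx.1
      rwa [Real.sqrt_mul hγ₁.le, Real.sqrt_sq (norm_nonneg _)] at this
    have h2 : Real.sqrt (∑' k, b k ^ 2) ≤ Real.sqrt δ₂ * ‖Θ x‖ := by
      have := Real.sqrt_le_sqrt hgx.2
      rwa [Real.sqrt_mul hδ₂.le, Real.sqrt_sq (norm_nonneg _)] at this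
    have h3 : ‖Θ x‖ ≤ ‖Θ‖ * ‖Θ.adjoint x‖ / m₀ := by
      have h4 := Θ.le_opNorm x
      have h5 := hbb x
      have h6 : (0:ℝ) ≤ ‖Θ‖ := norm_nonneg _
      rw [le_div_iff₀ hm₀]
      nlinarith
    have hAle : Real.sqrt (∑' k, a k ^ 2) ≤
        Real.sqrt (∑' k, c k ^ 2) + Real.sqrt (∑' k, b k ^ 2) := by
      refine le_trans (Real.sqrt_le_sqrt ?_) hscb.2
      exact Summable.tsum_le_tsum (fun k => pow_le_pow_left₀ (hna k) (hacb k) 2) hsa hscb.1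
    have hsδ₂ : 0 < Real.sqrt δ₂ := Real.sqrt_pos.mpr hδ₂
    have hkey : (Real.sqrt γ₁ - Real.sqrt δ₂ * ‖Θ‖ / m₀) * ‖Θ.adjoint x‖ ≤
        Real.sqrt (∑' k, c k ^ 2) := by
      have h8 := mul_le_mul_of_nonneg_left h3 hsδ₂.le
      have e3 : Real.sqrt δ₂ * (‖Θ‖ * ‖Θ.adjoint x‖ / m₀) =
          Real.sqrt δ₂ * ‖Θ‖ / m₀ * ‖Θ.adjoint x‖ := by ring
      rw [e3] at h8
      linarith [h1, h2, hAle, h8]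
    have ht : 0 < Real.sqrt γ₁ - Real.sqrt δ₂ * ‖Θ‖ / m₀ := by
      rw [Real.sqrt_div hγ₁.le] at hcond
      have h7 := mul_lt_mul_of_pos_left hcond hsδ₂
      have e1 : Real.sqrt δ₂ * (Real.sqrt γ₁ / Real.sqrt δ₂) = Real.sqrt γ₁ := by
        field_simp
      have e2 : Real.sqrt δ₂ * (‖Θ‖ / m₀) = Real.sqrt δ₂ * ‖Θ‖ / m₀ := by ring
      rw [e1, e2] at h7
      linarith
    have hnn : 0 ≤ (Real.sqrt γ₁ - Real.sqrt δ₂ * ‖Θ‖ / m₀) * ‖Θ.adjoint x‖ :=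
      mul_nonneg ht.le (norm_nonneg _)
    have := pow_le_pow_left₀ hnn hkey 2
    rw [Real.sq_sqrt (tsum_nonneg fun k => sq_nonneg (c k))] at this
    calc (Real.sqrt γ₁ - Real.sqrt δ₂ * ‖Θ‖ / m₀) ^ 2 * ‖Θ.adjoint x‖ ^ 2
        = ((Real.sqrt γ₁ - Real.sqrt δ₂ * ‖Θ‖ / m₀) * ‖Θ.adjoint x‖) ^ 2 := by ring
      _ ≤ ∑' k, c k ^ 2 := this
  · -- upper bound
    have hs2 : Summable fun k => 2 * a k ^ 2 + 2 * b k ^ 2 :=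
      ((hsa.mul_left 2).add (hsb.mul_left 2))
    calc ∑' k, c k ^ 2 ≤ ∑' k, (2 * a k ^ 2 + 2 * b k ^ 2) := by
          refine Summable.tsum_le_tsum (fun k => ?_) hsc hs2
          nlinarith [hcab k, hna k, hnb k, hnc k, sq_nonneg (a k - b k)]
      _ = 2 * (∑' k, a k ^ 2) + 2 * (∑' k, b k ^ 2) := by
          rw [Summable.tsum_add (hsa.mul_left 2) (hsb.mul_left 2), tsum_mul_left, tsum_mul_left]
      _ ≤ 2 * (δ₁ + δ₂) * ‖Θ x‖ ^ 2 := by nlinarith [hfx.2, hgx.2]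
end
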